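/- Let R = (1+√17)/4, α = (3+√17)/4, β = (5+√17)/4, γ = R, and fix any real δ. Define S_k = (γ+1)·α^k + δ·(β^k − α^k) − γ for all natural numbers k. Then for all k ≥ 1, (2R−2)·S_{k+1} − (R+1)·S_k + (R+1)·S_{k−1} = −(2−R). -/
import Mathlib


theorem stmt16 (R α β γ δ : ℝ)
    (hR : R = (1 + Real.sqrt 17) / 4)
    (hα : α = (3 + Real.sqrt 17) / 4)
    (hβ : β = (5 + Real.sqrt 17) / 4)
    (hγ : γ = R)
    (S : ℕ → ℝ)
    (hS : ∀ k : ℕ, S k = (γ + 1) * α ^ k + δ * (β ^ k - α ^ k) - γ) :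
    ∀ k : ℕ, 1 ≤ k →
      (2 * R - 2) * S (k + 1) - (R + 1) * S k + (R + 1) * S (k - 1) = -(2 - R) := by
  have h17 : Real.sqrt 17 ^ 2 = 17 := Real.sq_sqrt (by norm_num)
  have hPα : (2*R-2)*α^2 - (R+1)*α + (R+1) = 0 := by
    subst hR hα; nlinarith [h17]
  have hPβ : (2*R-2)*β^2 - (R+1)*β + (R+1) = 0 := by
    subst hR hβ; nlinarith [h17]
  have hc : (2*R-2)*γ = 2 - R := by
    subst hγ hR; nlinarith [h17]
  intro k hk
  obtain ⟨n, rfl⟩ := Nat.exists_eq_add_of_le hk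
  simp only [hS, Nat.add_sub_cancel_left, Nat.add_sub_cancel, Nat.add_comm 1 n]
  linear_combination α^n * (γ+1-δ) * hPα + β^n * δ * hPβ - hc
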